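/- Let G be a non-Hamiltonian graph on n ≥ 3 vertices possessing a Hamiltonian path v_1, v_2, …, v_n, and set x = v_1 and y = v_n. Then for all indices a < b such that v_a y and v_b x are edges of G, there exists an index s with a < s < b such that neither v_s x nor v_s y is an edge of G. Moreover, if such an index s is unique, then v_{s−1} y and v_{s+1} x are edges of G. -/

import Mathlib

open SimpleGraph

namespace StmtAux

variable {V : Type*} {G : SimpleGraph V}

/-- Build a walk along a sequence of pairwise-adjacent vertices. -/
def walkTo (G : SimpleGraph V) (w : ℕ → V) :
    ∀ m, (∀ j, j < m → G.Adj (w j) (w (j + 1))) → G.Walk (w 0) (w m)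
  | 0, _ => Walk.nil
  | (m + 1), h =>
      (walkTo G w m fun j hj => h j (hj.trans m.lt_succ_self)).concat (h m m.lt_succ_self)

lemma walkTo_support (w : ℕ → V) :
    ∀ m (h : ∀ j, j < m → G.Adj (w j) (w (j + 1))),
      (walkTo G w m h).support = (List.range (m + 1)).map w := by
  intro m
  induction m with
  | zero => intro h; simp [walkTo, List.range_succ]
  | succ m ih =>
      intro h
      rw [walkTo, Walk.support_concat, ih, List.range_succ (n := m + 1)]
      simp

lemma walkTo_edges (w : ℕ → V) :
    ∀ m (h : ∀ j, j < m → G.Adj (w j) (w (j + 1))),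
      (walkTo G w m h).edges = (List.range m).map (fun j => s(w j, w (j + 1))) := by
  intro m
  induction m with
  | zero => intro h; simp [walkTo]
  | succ m ih =>
      intro h
      rw [walkTo, Walk.edges_concat, ih, List.range_succ (n := m)]
      simp

/-- The key "crossing" lemma: in a non-Hamiltonian graph with a Hamiltonian path,
we cannot have both `v i ~ v n` and `v (i+1) ~ v 1`. -/
lemma cross {V : Type*} [Fintype V] [DecidableEq V] {n : ℕ} (hn : 3 ≤ n)
    (G : SimpleGraph V) (hham : ¬ G.IsHamiltonian)
    (v : ℕ → V)
    (hinj : ∀ i j, 1 ≤ i → i ≤ n → 1 ≤ j → j ≤ n → v i = v j → i = j)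
    (hsurj : ∀ w : V, ∃ i, 1 ≤ i ∧ i ≤ n ∧ v i = w)
    (hpath : ∀ i, 1 ≤ i → i < n → G.Adj (v i) (v (i + 1))) :
    ∀ i, 1 ≤ i → i < n → G.Adj (v i) (v n) → ¬ G.Adj (v (i + 1)) (v 1) := by
  intro i hi1 hin hiy hix
  apply hham
  intro _
  -- the reordered Hamiltonian sequence
  set f : ℕ → ℕ := fun j => if j < i then j + 1 else n + i - j with hf
  set w : ℕ → V := fun j => v (f j) with hw
  have hfrange : ∀ j, j ≤ n - 1 → 1 ≤ f j ∧ f j ≤ n := by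
    intro j hj
    simp only [hf]
    split <;> omega
  have hfinj : ∀ j k, j ≤ n - 1 → k ≤ n - 1 → f j = f k → j = k := by
    intro j k hj hk
    simp only [hf]
    split <;> split <;> omega
  have hwinj : ∀ j k, j ≤ n - 1 → k ≤ n - 1 → w j = w k → j = k := by
    intro j k hj hk hjk
    exact hfinj j k hj hk (hinj _ _ (hfrange j hj).1 (hfrange j hj).2
      (hfrange k hk).1 (hfrange k hk).2 hjk)
  have hwsurj : ∀ x : V, ∃ j, j ≤ n - 1 ∧ w j = x := by
    intro x
    obtain ⟨k, hk1, hkn, hkx⟩ := hsurj x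
    by_cases hki : k ≤ i
    · refine ⟨k - 1, by omega, ?_⟩
      simp only [hw, hf]
      rw [if_pos (by omega)]
      rw [show k - 1 + 1 = k by omega]
      exact hkx
    · refine ⟨n + i - k, by omega, ?_⟩
      simp only [hw, hf]
      rw [if_neg (by omega)]
      rw [show n + i - (n + i - k) = k by omega]
      exact hkx
  have hadj : ∀ j, j < n - 1 → G.Adj (w j) (w (j + 1)) := by
    intro j hj
    simp only [hw, hf]
    by_cases h1 : j + 1 < i
    · rw [if_pos (by omega), if_pos h1]
      exact hpath (j + 1) (by omega) (by omega)
    · by_cases h2 : j < i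
      · -- j = i - 1, edge v i ~ v n
        rw [if_pos h2, if_neg h1]
        rw [show j + 1 = i by omega, show n + i - i = n by omega]
        exact hiy
      · rw [if_neg h2, if_neg h1]
        rw [show n + i - j = (n + i - (j + 1)) + 1 by omega]
        exact (hpath (n + i - (j + 1)) (by omega) (by omega)).symm
  -- the Hamiltonian cycle
  have hb' : G.Adj (w 0) (w (n - 1)) := by
    simp only [hw, hf]
    rw [if_pos (by omega), if_neg (by omega)]
    rw [show n + i - (n - 1) = i + 1 by omega]
    exact hix.symm
  set q : G.Walk (w 0) (w (n - 1)) := walkTo G w (n - 1) hadj with hq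
  have hsupp : q.support = (List.range (n - 1 + 1)).map w := walkTo_support w (n - 1) hadj
  have hedges : q.edges = (List.range (n - 1)).map (fun j => s(w j, w (j + 1))) :=
    walkTo_edges w (n - 1) hadj
  have hsuppnd : q.support.Nodup := by
    rw [hsupp]
    refine List.Nodup.map_on ?_ List.nodup_range
    intro x hx y hy hxy
    rw [List.mem_range] at hx hy
    exact hwinj x y (by omega) (by omega) hxy
  refine ⟨w 0, Walk.cons hb' q.reverse, ?_⟩
  rw [Walk.isHamiltonianCycle_iff_isCycle_and_support_count_tail_eq_one]
  constructor
  · rw [Walk.cons_isCycle_iff]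
    constructor
    · rw [Walk.isPath_def, Walk.support_reverse, List.nodup_reverse]
      exact hsuppnd
    · rw [Walk.edges_reverse, List.mem_reverse, hedges]
      intro hmem
      rw [List.mem_map] at hmem
      obtain ⟨j, hj, hje⟩ := hmem
      rw [List.mem_range] at hj
      rw [Sym2.eq_iff] at hje
      rcases hje with ⟨h1, h2⟩ | ⟨h1, h2⟩
      · have := hwinj j 0 (by omega) (by omega) h1
        have := hwinj (j + 1) (n - 1) (by omega) (by omega) h2
        omega
      · have := hwinj j (n - 1) (by omega) (by omega) h1
        omega
  · intro x
    rw [Walk.support_cons, List.tail_cons, Walk.support_reverse]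
    refine List.count_eq_one_of_mem (by rw [List.nodup_reverse]; exact hsuppnd) ?_
    rw [List.mem_reverse, hsupp, List.mem_map]
    obtain ⟨j, hj, hjx⟩ := hwsurj x
    exact ⟨j, List.mem_range.mpr (by omega), hjx⟩

end StmtAux

/-- Let `G` be a non-Hamiltonian graph on `n ≥ 3` vertices possessing a Hamiltonian
path `v_1, v_2, …, v_n`, and set `x = v_1` and `y = v_n`. Then for all indices
`a < b` such that `v_a y` and `v_b x` are edges of `G`, there exists an index `s` with
`a < s < b` such that neither `v_s x` nor `v_s y` is an edge of `G`. Moreover, if such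
an index `s` is unique, then `v_{s-1} y` and `v_{s+1} x` are edges of `G`. -/
theorem stmt_10 {V : Type*} [Fintype V] [DecidableEq V] {n : ℕ} (hn : 3 ≤ n)
    (G : SimpleGraph V) (hham : ¬ G.IsHamiltonian)
    (v : ℕ → V)
    (hinj : ∀ i j, 1 ≤ i → i ≤ n → 1 ≤ j → j ≤ n → v i = v j → i = j)
    (hsurj : ∀ w : V, ∃ i, 1 ≤ i ∧ i ≤ n ∧ v i = w)
    (hpath : ∀ i, 1 ≤ i → i < n → G.Adj (v i) (v (i + 1))) :
    ∀ a b, 1 ≤ a → a < b → b ≤ n → G.Adj (v a) (v n) → G.Adj (v b) (v 1) →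
      (∃ s, a < s ∧ s < b ∧ ¬ G.Adj (v s) (v 1) ∧ ¬ G.Adj (v s) (v n)) ∧
      (∀ s, a < s → s < b → ¬ G.Adj (v s) (v 1) → ¬ G.Adj (v s) (v n) →
        (∀ s', a < s' → s' < b → ¬ G.Adj (v s') (v 1) → ¬ G.Adj (v s') (v n) → s' = s) →
        G.Adj (v (s - 1)) (v n) ∧ G.Adj (v (s + 1)) (v 1)) := by
  have cross := StmtAux.cross hn G hham v hinj hsurj hpath
  intro a b ha1 hab hbn hay hbx
  constructor
  · by_contra hno
    push_neg at hno
    -- every index in (a, b) is adjacent to v 1 or v n; show all are adjacent to v n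
    have claim : ∀ t, a ≤ t → t < b → G.Adj (v t) (v n) := by
      intro t hat
      induction t, hat using Nat.le_induction with
      | base => intro _; exact hay
      | succ t hat ih =>
          intro htb
          have hty := ih (by omega)
          have hnx : ¬ G.Adj (v (t + 1)) (v 1) := cross t (by omega) (by omega) hty
          exact hno (t + 1) (by omega) htb hnx
    have hb1y := claim (b - 1) (by omega) (by omega)
    have := cross (b - 1) (by omega) (by omega) hb1y
    rw [show b - 1 + 1 = b by omega] at this
    exact this hbx
  · intro s has hsb hsx hsy huniq
    constructor
    · -- v (s-1) ~ v n
      have claim : ∀ t, a ≤ t → t < s → G.Adj (v t) (v n) := by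
        intro t hat
        induction t, hat using Nat.le_induction with
        | base => intro _; exact hay
        | succ t hat ih =>
            intro hts
            have hty := ih (by omega)
            have hnx : ¬ G.Adj (v (t + 1)) (v 1) := cross t (by omega) (by omega) hty
            by_contra hny
            exact absurd (huniq (t + 1) (by omega) (by omega) hnx hny) (by omega)
      have := claim (s - 1) (by omega) (by omega)
      exact this
    · -- v (s+1) ~ v 1, downward induction from b
      have claim2 : ∀ d t, b - t ≤ d → s < t → t ≤ b → G.Adj (v t) (v 1) := by
        intro d
        induction d with
        | zero =>
            intro t h1 h2 h3
            rw [show t = b by omega]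
            exact hbx
        | succ d ih =>
            intro t h1 h2 h3
            by_cases hteq : t = b
            · rw [hteq]; exact hbx
            · have ht1 : G.Adj (v (t + 1)) (v 1) := ih (t + 1) (by omega) (by omega) (by omega)
              have hnty : ¬ G.Adj (v t) (v n) := by
                intro hty
                exact cross t (by omega) (by omega) hty ht1
              by_contra hntx
              exact absurd (huniq t (by omega) (by omega) hntx hnty) (by omega)
      exact claim2 (b - (s + 1)) (s + 1) le_rfl (by omega) (by omega)
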